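/- The cluster variation of information v(a,b) = H_a + H_b - 2 I_{ab} is non-negative, where H_a = -(n_a/N) log(n_a/N), H_b = -(n_b/N) log(n_b/N), and I_{ab} = (n_{ab}/N) log(n_{ab} N / (n_a n_b)), for any positive integers n_a, n_b ≤ N and overlap 0 ≤ n_{ab} ≤ min(n_a, n_b). -/

import Mathlib

/-- The cluster variation of information `v(a,b) = H_a + H_b - 2 I_{ab}` is non-negative. -/
theorem cvi_nonneg (N na nb nab : ℕ)
    (hna : 0 < na) (hnaN : na ≤ N) (hnb : 0 < nb) (hnbN : nb ≤ N)
    (hab : nab ≤ min na nb) :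
    0 ≤ (-((na : ℝ) / N) * Real.log ((na : ℝ) / N)
        + -((nb : ℝ) / N) * Real.log ((nb : ℝ) / N)
        - 2 * (if nab = 0 then 0 else
            ((nab : ℝ) / N) * Real.log ((nab : ℝ) * N / ((na : ℝ) * nb)))) := by
  have hN : 0 < N := lt_of_lt_of_le hna hnaN
  have hNr : (0:ℝ) < N := by exact_mod_cast hN
  have hnar : (0:ℝ) < na := by exact_mod_cast hna
  have hnbr : (0:ℝ) < nb := by exact_mod_cast hnb
  set x : ℝ := (na:ℝ)/N with hx
  set y : ℝ := (nb:ℝ)/N with hy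
  have hx0 : 0 < x := div_pos hnar hNr
  have hy0 : 0 < y := div_pos hnbr hNr
  have hx1 : x ≤ 1 := by rw [hx, div_le_one hNr]; exact_mod_cast hnaN
  have hy1 : y ≤ 1 := by rw [hy, div_le_one hNr]; exact_mod_cast hnbN
  have hlx : Real.log x ≤ 0 := Real.log_nonpos (le_of_lt hx0) hx1
  have hly : Real.log y ≤ 0 := Real.log_nonpos (le_of_lt hy0) hy1
  have hHx : 0 ≤ -x * Real.log x := by nlinarith
  have hHy : 0 ≤ -y * Real.log y := by nlinarith
  by_cases h0 : nab = 0
  · simp [h0]; linarith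
  · simp only [h0, if_false]
    have hnab : 0 < nab := Nat.pos_of_ne_zero h0
    have hnabr : (0:ℝ) < nab := by exact_mod_cast hnab
    set z : ℝ := (nab:ℝ)/N with hz
    have hz0 : 0 < z := div_pos hnabr hNr
    have hzx : z ≤ x := by
      rw [hz, hx]; gcongr; exact_mod_cast le_trans hab (min_le_left _ _)
    have hzy : z ≤ y := by
      rw [hz, hy]; gcongr; exact_mod_cast le_trans hab (min_le_right _ _)
    have harg : (nab:ℝ)*N/((na:ℝ)*nb) = z/(x*y) := by
      rw [hz, hx, hy]; field_simp
    rw [harg, Real.log_div hz0.ne' (mul_pos hx0 hy0).ne', Real.log_mul hx0.ne' hy0.ne']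
    have hlzx : Real.log z ≤ Real.log x := Real.log_le_log hz0 hzx
    have hlzy : Real.log z ≤ Real.log y := Real.log_le_log hz0 hzy
    have h1 : z*(Real.log z - Real.log x) ≤ 0 :=
      mul_nonpos_of_nonneg_of_nonpos hz0.le (by linarith)
    have h2 : z*(Real.log z - Real.log y) ≤ 0 :=
      mul_nonpos_of_nonneg_of_nonpos hz0.le (by linarith)
    have h3 : z*(-Real.log y) ≤ y*(-Real.log y) :=
      mul_le_mul_of_nonneg_right hzy (by linarith)
    have h4 : z*(-Real.log x) ≤ x*(-Real.log x) :=
      mul_le_mul_of_nonneg_right hzx (by linarith)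
    nlinarith [h1, h2, h3, h4]
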